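/- Let G be a finite connected simple graph with at least 3 vertices. Every good vertex of G lies on a cycle of G. -/

import Mathlib

open SimpleGraph

/-- The Wiener index: sum of distances over unordered pairs of vertices. -/
noncomputable def wiener {V : Type*} [Fintype V] (G : SimpleGraph V) : ℕ :=
  (∑ u : V, ∑ v : V, G.dist u v) / 2

/-- The transmission of a vertex: sum of distances to all vertices. -/
noncomputable def transmission {V : Type*} [Fintype V] (G : SimpleGraph V) (v : V) : ℕ :=
  ∑ u : V, G.dist v u

/-- The graph `G - v`: induced subgraph on the vertices distinct from `v`. -/
def delVert {V : Type*} (G : SimpleGraph V) (v : V) : SimpleGraph {u : V // u ≠ v} :=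
  SimpleGraph.comap Subtype.val G

/-- A vertex is good if `G - v` is connected and has the same Wiener index as `G`. -/
def good {V : Type*} [Fintype V] [DecidableEq V] (G : SimpleGraph V) (v : V) : Prop :=
  (delVert G v).Connected ∧ wiener (delVert G v) = wiener G

/-- The inclusion homomorphism from `G - v` to `G`. -/
private def delVertHom {V : Type*} (G : SimpleGraph V) (v : V) : delVert G v →g G :=
  ⟨Subtype.val, fun h => h⟩

private lemma sum_split {V : Type*} [Fintype V] [DecidableEq V] (v : V) (f : V → ℕ) :
    ∑ u : V, f u = f v + ∑ u : {x : V // x ≠ v}, f ↑u := by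
  rw [← Finset.add_sum_erase Finset.univ f (Finset.mem_univ v)]
  congr 1
  exact Finset.sum_subtype _ (fun x => by simp) f

/-- A walk avoiding `v` lifts to `G - v` with the same length. -/
private lemma lift_walk {V : Type*} {G : SimpleGraph V} {v : V} :
    ∀ {a b : V} (p : G.Walk a b), v ∉ p.support → ∀ (ha : a ≠ v) (hb : b ≠ v),
      ∃ q : (delVert G v).Walk ⟨a, ha⟩ ⟨b, hb⟩, q.length = p.length
  | _, _, SimpleGraph.Walk.nil, _, _, _ => ⟨SimpleGraph.Walk.nil, rfl⟩
  | a, b, SimpleGraph.Walk.cons (v := c) h p, hp, ha, hb => by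
    have hvp : v ∉ p.support := fun h' => hp (by
      rw [SimpleGraph.Walk.support_cons]; exact List.mem_cons_of_mem _ h')
    have hc : c ≠ v := fun h' => hvp (h' ▸ p.start_mem_support)
    obtain ⟨q, hq⟩ := lift_walk p hvp hc hb
    exact ⟨SimpleGraph.Walk.cons (show (delVert G v).Adj ⟨a, ha⟩ ⟨c, hc⟩ from h) q, by simp [hq]⟩

/-- In a connected graph with at least 3 vertices, every good vertex lies on a cycle. -/
theorem good_vertex_mem_cycle {V : Type*} [Fintype V] [DecidableEq V]
    (G : SimpleGraph V) (hG : G.Connected) (hcard : 3 ≤ Fintype.card V)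
    (v : V) (hv : good G v) :
    ∃ (u : V) (w : G.Walk u u), w.IsCycle ∧ v ∈ w.support := by
  obtain ⟨hconn, hW⟩ := hv
  by_cases hdeg : ∃ a b : V, G.Adj v a ∧ G.Adj v b ∧ a ≠ b
  · -- two distinct neighbors: build a cycle through v
    obtain ⟨a, b, hva, hvb, hab⟩ := hdeg
    obtain ⟨w0⟩ := hconn.preconnected ⟨a, hva.ne'⟩ ⟨b, hvb.ne'⟩
    set p1 := w0.toPath with hp1
    have hp' : (p1.1.map (delVertHom G v)).IsPath :=
      SimpleGraph.Walk.map_isPath_of_injective Subtype.val_injective p1.2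
    set p' : G.Walk a b := p1.1.map (delVertHom G v) with hp'def
    have hvs : v ∉ p'.support := by
      rw [hp'def]; erw [SimpleGraph.Walk.support_map]
      simp only [List.mem_map]
      rintro ⟨⟨x, hx⟩, -, hxe⟩
      exact hx hxe
    have hpath : (p'.concat hvb.symm).IsPath := by
      rw [← SimpleGraph.Walk.isPath_reverse_iff, SimpleGraph.Walk.reverse_concat,
        SimpleGraph.Walk.cons_isPath_iff]
      refine ⟨(SimpleGraph.Walk.isPath_reverse_iff _).2 hp', ?_⟩
      rw [SimpleGraph.Walk.support_reverse, List.mem_reverse]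
      exact hvs
    have hcyc : (SimpleGraph.Walk.cons hva (p'.concat hvb.symm)).IsCycle := by
      rw [SimpleGraph.Walk.cons_isCycle_iff]
      refine ⟨hpath, ?_⟩
      rw [SimpleGraph.Walk.edges_concat]
      simp only [List.concat_eq_append, List.mem_append, List.mem_singleton]
      rintro (he | he)
      · exact hvs (SimpleGraph.Walk.fst_mem_support_of_mem_edges p' he)
      · rw [Sym2.eq_iff] at he
        rcases he with ⟨-, h2⟩ | ⟨-, h2⟩
        · exact hva.ne' h2
        · exact hab h2
    exact ⟨v, _, hcyc, SimpleGraph.Walk.start_mem_support _⟩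
  · -- v has at most one neighbor: contradiction with the Wiener condition
    exfalso
    push_neg at hdeg
    -- shortest paths between vertices ≠ v avoid v
    have key : ∀ (u w : V) (hu : u ≠ v) (hw : w ≠ v),
        (delVert G v).dist ⟨u, hu⟩ ⟨w, hw⟩ ≤ G.dist u w := by
      intro u w hu hw
      obtain ⟨p, hp, hlen⟩ := hG.exists_path_of_dist u w
      have hvp : v ∉ p.support := by
        intro hmem
        have hnd := hp.support_nodup
        rw [← p.take_spec hmem, SimpleGraph.Walk.support_append, List.nodup_append] at hnd
        set q1 := p.takeUntil v hmem with hq1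
        set q2 := p.dropUntil v hmem with hq2
        have hn1 : ¬ q1.reverse.Nil := SimpleGraph.Walk.not_nil_of_ne (Ne.symm hu)
        have hn2 : ¬ q2.Nil := SimpleGraph.Walk.not_nil_of_ne (Ne.symm hw)
        have hax : G.Adj v (q1.reverse.getVert 1) := SimpleGraph.Walk.adj_snd hn1
        have hay : G.Adj v (q2.getVert 1) := SimpleGraph.Walk.adj_snd hn2
        have hxy : q1.reverse.getVert 1 = q2.getVert 1 := hdeg _ _ hax hay
        have hx1 : q1.reverse.getVert 1 ∈ q1.support := by
          have hmem1 : q1.reverse.getVert 1 ∈ q1.reverse.support := by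
            rw [SimpleGraph.Walk.mem_support_iff_exists_getVert]
            refine ⟨1, rfl, ?_⟩
            rw [SimpleGraph.Walk.length_reverse]
            have := (SimpleGraph.Walk.not_nil_iff_lt_length.mp hn1)
            rw [SimpleGraph.Walk.length_reverse] at this
            omega
          rwa [SimpleGraph.Walk.support_reverse, List.mem_reverse] at hmem1
        have hy2 : q2.getVert 1 ∈ q2.support.tail := by
          have hy : q2.getVert 1 ∈ q2.support := by
            rw [SimpleGraph.Walk.mem_support_iff_exists_getVert]
            exact ⟨1, rfl, SimpleGraph.Walk.not_nil_iff_lt_length.mp hn2⟩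
          rw [q2.support_eq_cons] at hy
          rcases List.mem_cons.mp hy with h' | h'
          · exact absurd h'.symm hay.ne
          · exact h'
        exact hnd.2.2 _ hx1 _ (hxy ▸ hy2) rfl
      obtain ⟨q, hq⟩ := lift_walk p hvp hu hw
      calc (delVert G v).dist ⟨u, hu⟩ ⟨w, hw⟩ ≤ q.length := SimpleGraph.dist_le q
        _ = G.dist u w := by rw [hq, hlen]
    -- transmission is positive
    have hnt : Nontrivial V := Fintype.one_lt_card_iff_nontrivial.mp (by omega)
    obtain ⟨u0, hu0⟩ := exists_ne v
    have ht : 1 ≤ ∑ w : V, G.dist v w :=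
      le_trans (hG.pos_dist_of_ne (Ne.symm hu0))
        (Finset.single_le_sum (fun i _ => Nat.zero_le _) (Finset.mem_univ u0))
    -- decompose the total distance sum
    have hS : ∑ u : V, ∑ w : V, G.dist u w
        = 2 * (∑ w : V, G.dist v w)
          + ∑ u : {x : V // x ≠ v}, ∑ w : {x : V // x ≠ v}, G.dist ↑u ↑w := by
      rw [sum_split v (fun u => ∑ w : V, G.dist u w)]
      have h2 : ∀ u : {x : V // x ≠ v},
          ∑ w : V, G.dist (↑u) w = G.dist ↑u v + ∑ w : {x : V // x ≠ v}, G.dist ↑u ↑w :=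
        fun u => sum_split v (fun w => G.dist ↑u w)
      rw [Finset.sum_congr rfl (fun u _ => h2 u), Finset.sum_add_distrib]
      have h3 : ∑ u : {x : V // x ≠ v}, G.dist (↑u) v = ∑ w : V, G.dist v w := by
        have h4 := sum_split v (fun w => G.dist v w)
        rw [SimpleGraph.dist_self, zero_add] at h4
        rw [h4]
        exact Finset.sum_congr rfl fun u _ => SimpleGraph.dist_comm
      rw [h3]
      ring
    have hT : ∑ u : {x : V // x ≠ v}, ∑ w : {x : V // x ≠ v}, (delVert G v).dist u w
        ≤ ∑ u : {x : V // x ≠ v}, ∑ w : {x : V // x ≠ v}, G.dist ↑u ↑w :=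
      Finset.sum_le_sum fun u _ => Finset.sum_le_sum fun w _ => key ↑u ↑w u.2 w.2
    set SS := ∑ u : {x : V // x ≠ v}, ∑ w : {x : V // x ≠ v}, (delVert G v).dist u w with hSS
    set S := ∑ u : V, ∑ w : V, G.dist u w with hSdef
    have hW' : SS / 2 = S / 2 := hW
    have hle : SS + 2 ≤ S := by omega
    have : SS / 2 < S / 2 :=
      calc SS / 2 < SS / 2 + 1 := Nat.lt_succ_self _
        _ = (SS + 2) / 2 := (Nat.add_div_right SS (by norm_num)).symm
        _ ≤ S / 2 := Nat.div_le_div_right hle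
    omega
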